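/- Let Ψ = (E, Δ) be an ordered complex satisfying the First Basis Property and let I be a face of Δ disjoint from the lexicographically smallest facet B₀. Then the lexicographically smallest facet of the contraction Ψ/I is contained in B₀. -/

import Mathlib

variable {α : Type*} [LinearOrder α] [DecidableEq α] [Fintype α]

/-- A (abstract) simplicial complex: a downward closed family of finite sets. -/
def IsComplex (Δ : Finset α → Prop) : Prop :=
  ∀ ⦃s t : Finset α⦄, Δ t → s ⊆ t → Δ s

/-- A simplicial complex with all faces contained in the ground set `E`. -/
def IsComplexOn (E : Finset α) (Δ : Finset α → Prop) : Prop :=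
  (∀ ⦃s⦄, Δ s → s ⊆ E) ∧ IsComplex Δ

/-- A facet (basis): a maximal face. -/
def IsFacet (Δ : Finset α → Prop) (B : Finset α) : Prop :=
  Δ B ∧ ∀ ⦃C⦄, Δ C → B ⊆ C → B = C

/-- A circuit with respect to the ground set `E`: a minimal non-face contained in `E`. -/
def IsCircuitOn (E : Finset α) (Δ : Finset α → Prop) (C : Finset α) : Prop :=
  C ⊆ E ∧ ¬ Δ C ∧ ∀ ⦃D⦄, D ⊂ C → Δ D

/-- A circuit: a minimal non-face. -/
def IsCircuit (Δ : Finset α → Prop) (C : Finset α) : Prop :=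
  ¬ Δ C ∧ ∀ ⦃D⦄, D ⊂ C → Δ D

/-- Purity: all facets have the same cardinality. -/
def IsPure (Δ : Finset α → Prop) : Prop :=
  ∀ ⦃B B'⦄, IsFacet Δ B → IsFacet Δ B' → B.card = B'.card

/-- Lexicographic order on finite sets, comparing sorted element lists:
`B <lex B'` iff the minimum of the symmetric difference lies in `B`. -/
def lexLt (B B' : Finset α) : Prop :=
  ∃ a ∈ B \ B', ∀ b ∈ symmDiff B B', a ≤ b

def lexLe (B B' : Finset α) : Prop := B = B' ∨ lexLt B B'

/-- `B₀` is the lexicographically smallest facet of `Δ`. -/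
def IsLexMinFacet (Δ : Finset α → Prop) (B₀ : Finset α) : Prop :=
  IsFacet Δ B₀ ∧ ∀ ⦃B⦄, IsFacet Δ B → lexLe B₀ B

/-- Gale (componentwise) order: the `i`-th smallest element of `B` is at most
the `i`-th smallest element of `B'`, for all `i` (in particular equal cardinalities). -/
def galeLe (B B' : Finset α) : Prop :=
  List.Forall₂ (· ≤ ·) (Finset.sort B (· ≤ ·)) (Finset.sort B' (· ≤ ·))

/-- Quasi-exchange axiom (without the purity requirement). -/
def QE (Δ : Finset α → Prop) : Prop :=
  ∀ ⦃B₁ B₂⦄, IsFacet Δ B₁ → IsFacet Δ B₂ →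
    ∀ b₁ ∈ B₁ \ B₂, (∀ b ∈ B₂ \ B₁, b < b₁) →
      ∃ b₂ ∈ B₂ \ B₁, IsFacet Δ (insert b₂ (B₁.erase b₁))

/-- Quasi-circuit axiom (with circuits taken relative to the ground set `E`). -/
def QCon (E : Finset α) (Δ : Finset α → Prop) : Prop :=
  ∀ ⦃C₁ C₂⦄, IsCircuitOn E Δ C₁ → IsCircuitOn E Δ C₂ → C₁ ≠ C₂ →
    ∀ c ∈ C₁ ∩ C₂, (∃ m ∈ symmDiff C₁ C₂, c < m) →
      ∃ C₃, IsCircuitOn E Δ C₃ ∧ C₃ ⊆ (C₁ ∪ C₂).erase c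

/-- Quasi-circuit axiom (circuits are arbitrary minimal non-faces). -/
def QC (Δ : Finset α → Prop) : Prop :=
  ∀ ⦃C₁ C₂⦄, IsCircuit Δ C₁ → IsCircuit Δ C₂ → C₁ ≠ C₂ →
    ∀ c ∈ C₁ ∩ C₂, (∃ m ∈ symmDiff C₁ C₂, c < m) →
      ∃ C₃, IsCircuit Δ C₃ ∧ C₃ ⊆ (C₁ ∪ C₂).erase c

/-- `b` is an internally passive element of the facet `B`. -/
def InternallyPassive (Δ : Finset α → Prop) (B : Finset α) (b : α) : Prop :=
  b ∈ B ∧ ∃ b', b' < b ∧ b' ∉ B ∧ IsFacet Δ (insert b' (B.erase b))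

/-- Contraction of a face `I`. -/
def contract (Δ : Finset α → Prop) (I : Finset α) : Finset α → Prop :=
  fun J => Disjoint J I ∧ Δ (J ∪ I)

/-- Quasi-independence axiom: `Δ` is pure and for faces `I₁, I₂` with `|I₁| > |I₂|`,
if `I₁ \ I ⊆ B_{I,0}` for some `I ⊆ I₁ ∩ I₂`, then some `e ∈ I₁ \ I₂` extends `I₂`. -/
def QI (Δ : Finset α → Prop) : Prop :=
  IsPure Δ ∧ ∀ ⦃I₁ I₂ : Finset α⦄, Δ I₁ → Δ I₂ → I₂.card < I₁.card →
    (∃ I, I ⊆ I₁ ∩ I₂ ∧ ∃ B, IsLexMinFacet (contract Δ I) B ∧ I₁ \ I ⊆ B) →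
    ∃ e ∈ I₁ \ I₂, Δ (insert e I₂)

/-- The First Basis Property. -/
inductive FBP : (Finset α → Prop) → Prop
  | rank1 (Δ : Finset α → Prop) (h : ∀ s, Δ s → s.card ≤ 1) : FBP Δ
  | unique (Δ : Finset α → Prop) (B : Finset α) (hB : IsFacet Δ B)
      (hu : ∀ B', IsFacet Δ B' → B' = B) : FBP Δ
  | step (Δ : Finset α → Prop) (B₀ : Finset α) (h₀ : IsLexMinFacet Δ B₀)
      (h1 : ∀ v, Δ {v} → v ∉ B₀ → FBP (contract Δ {v}))
      (h2 : ∀ v, Δ {v} → v ∉ B₀ →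
        ∃ Bv, IsLexMinFacet (contract Δ {v}) Bv ∧ Bv ⊆ B₀) :
      FBP Δ

/-- in a complex satisfying the First Basis Property, for a face `I`
disjoint from `B₀`, the lexicographically smallest facet of the contraction `Ψ/I`
is contained in `B₀`. -/
lemma lexMin_unique {Δ : Finset α → Prop} {B B' : Finset α}
    (h : IsLexMinFacet Δ B) (h' : IsLexMinFacet Δ B') : B = B' := by
  rcases h.2 h'.1 with h1 | ⟨a, ha, hmin⟩
  · exact h1
  rcases h'.2 h.1 with h2 | ⟨a', ha', hmin'⟩
  · exact h2.symm
  exfalso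
  simp only [Finset.mem_sdiff] at ha ha'
  have h1 : a ≤ a' := hmin a' (by simp [symmDiff, ha'.1, ha'.2])
  have h2 : a' ≤ a := hmin' a (by simp [symmDiff, ha.1, ha.2])
  have : a = a' := le_antisymm h1 h2
  exact ha'.2 (this ▸ ha.1)

lemma face_subset_facet {Δ : Finset α → Prop} (hc : IsComplex Δ) {I : Finset α}
    (hI : Δ I) : ∃ B, IsFacet Δ B ∧ I ⊆ B := by
  classical
  have hfin : {B : Finset α | Δ B ∧ I ⊆ B}.Finite := Set.toFinite _
  obtain ⟨B, hB, hmax⟩ := Set.Finite.exists_maximalFor Finset.card _ hfin ⟨I, hI, Finset.Subset.refl I⟩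
  refine ⟨B, ⟨hB.1, fun C hC hBC => ?_⟩, hB.2⟩
  have hCmem : C ∈ {B : Finset α | Δ B ∧ I ⊆ B} := ⟨hC, hB.2.trans hBC⟩
  exact Finset.eq_of_subset_of_card_le hBC
    ((hmax hCmem (Finset.card_le_card hBC)))

lemma contract_contract {Δ : Finset α → Prop} {v : α} {I : Finset α} (hv : v ∈ I) :
    contract (contract Δ {v}) (I.erase v) = contract Δ I := by
  funext J
  have hunion : (J ∪ I.erase v) ∪ {v} = J ∪ I := by
    rw [Finset.union_assoc]
    congr 1
    rw [Finset.union_comm, ← Finset.insert_eq, Finset.insert_erase hv]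
  simp only [contract, eq_iff_iff]
  constructor
  · rintro ⟨hd1, hd2, hΔ'⟩
    have hvJ : v ∉ J := by
      intro h
      exact (Finset.disjoint_left.mp hd2) (Finset.mem_union_left _ h) (Finset.mem_singleton_self v)
    refine ⟨Finset.disjoint_left.mpr fun a haJ haI => ?_, hunion ▸ hΔ'⟩
    rcases eq_or_ne a v with rfl | hne
    · exact hvJ haJ
    · exact (Finset.disjoint_left.mp hd1) haJ (Finset.mem_erase.mpr ⟨hne, haI⟩)
  · rintro ⟨hd, hΔ'⟩
    refine ⟨Finset.disjoint_of_subset_right (Finset.erase_subset _ _) hd, ?_, hunion.symm ▸ hΔ'⟩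
    rw [Finset.disjoint_singleton_right, Finset.mem_union]
    rintro (h | h)
    · exact (Finset.disjoint_left.mp hd) h hv
    · exact (Finset.mem_erase.mp h).1 rfl

lemma contract_complex {Δ : Finset α → Prop} (hc : IsComplex Δ) (I : Finset α) :
    IsComplex (contract Δ I) := by
  rintro s t ⟨hd, hΔ⟩ hst
  exact ⟨Finset.disjoint_of_subset_left hst hd,
    hc hΔ (Finset.union_subset_union_left hst)⟩

lemma stmt18_aux : ∀ (n : ℕ) (Δ : Finset α → Prop), IsComplex Δ → FBP Δ →
    ∀ B₀ : Finset α, IsLexMinFacet Δ B₀ →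
    ∀ I : Finset α, I.card = n → Δ I → Disjoint I B₀ →
    ∃ Bc, IsLexMinFacet (contract Δ I) Bc ∧ Bc ⊆ B₀ := by
  intro n
  induction n with
  | zero =>
    intro Δ hc hFBP B₀ hB₀ I hcard hI hdisj
    have hIe : I = ∅ := Finset.card_eq_zero.mp hcard
    subst hIe
    have : contract Δ ∅ = Δ := by
      funext J
      simp [contract]
    exact ⟨B₀, by rw [this]; exact hB₀, Finset.Subset.refl _⟩
  | succ n ih =>
    intro Δ hc hFBP B₀ hB₀ I hcard hI hdisj
    have hIne : I.Nonempty := Finset.card_pos.mp (by omega)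
    obtain ⟨v, hvI⟩ := hIne
    cases hFBP with
    | rank1 Δ h =>
      have hI1 : I.card ≤ 1 := h I hI
      have hIv : I = {v} := by
        have : I.card = 1 := by omega
        obtain ⟨a, ha⟩ := Finset.card_eq_one.mp this
        subst ha
        simp_all
      subst hIv
      refine ⟨∅, ⟨⟨⟨Finset.disjoint_empty_left _, by simpa using hI⟩, ?_⟩, ?_⟩,
        Finset.empty_subset _⟩
      · rintro C ⟨hCd, hCΔ⟩ -
        have := h _ hCΔ
        have hvC : v ∈ C ∪ {v} := by simp
        have hsub : C ∪ {v} ⊆ {v} := by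
          intro a haC
          have : (C ∪ {v}).card ≤ 1 := this
          rcases Finset.card_le_one.mp this a haC v hvC with h'
          simp [h']
        have : C ⊆ {v} := (Finset.subset_union_left).trans hsub
        have : C = ∅ := by
          rw [Finset.eq_empty_iff_forall_notMem]
          intro a haC
          have : a = v := Finset.mem_singleton.mp (this haC)
          exact (Finset.disjoint_left.mp hCd) haC (by simp [this])
        exact this.symm
      · intro B hB
        left
        rcases hB with ⟨⟨hBd, hBΔ⟩, hBmax⟩
        have := h _ hBΔ
        have hsub : B ⊆ {v} := Finset.subset_union_left.trans (by
          intro a haB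
          rcases Finset.card_le_one.mp this a haB v (by simp) with h'
          simp [h'])
        have hBe : B = ∅ := by
          rw [Finset.eq_empty_iff_forall_notMem]
          intro a haB
          have : a = v := Finset.mem_singleton.mp (hsub haB)
          exact (Finset.disjoint_left.mp hBd) haB (by simp [this])
        exact hBe.symm
    | unique Δ B hB hu =>
      exfalso
      obtain ⟨B', hB', hIB'⟩ := face_subset_facet hc hI
      have h1 : B' = B := hu B' hB'
      have h2 : B₀ = B := hu B₀ hB₀.1
      have hIB₀ : I ⊆ B₀ := by rw [h2, ← h1]; exact hIB'
      exact (Finset.disjoint_left.mp hdisj) hvI (hIB₀ hvI)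
    | step Δ B₀' h₀ h1 h2 =>
      have hB₀eq : B₀' = B₀ := lexMin_unique h₀ hB₀
      rw [hB₀eq] at h1 h2
      have hvB₀ : v ∉ B₀ := fun h => (Finset.disjoint_left.mp hdisj) hvI h
      have hvΔ : Δ {v} := hc hI (Finset.singleton_subset_iff.mpr hvI)
      obtain ⟨Bv, hBv, hBvB₀⟩ := h2 v hvΔ hvB₀
      have hFBPv : FBP (contract Δ {v}) := h1 v hvΔ hvB₀
      have hcv : IsComplex (contract Δ {v}) := contract_complex hc _
      have hI' : (contract Δ {v}) (I.erase v) := by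
        refine ⟨Finset.disjoint_singleton_right.mpr (fun h => (Finset.mem_erase.mp h).1 rfl), ?_⟩
        rwa [Finset.union_comm, ← Finset.insert_eq, Finset.insert_erase hvI]
      have hcard' : (I.erase v).card = n := by
        rw [Finset.card_erase_of_mem hvI]; omega
      have hdisj' : Disjoint (I.erase v) Bv :=
        Finset.disjoint_of_subset_right hBvB₀
          (Finset.disjoint_of_subset_left (Finset.erase_subset _ _) hdisj)
      obtain ⟨Bc, hBc, hBcBv⟩ := ih (contract Δ {v}) hcv hFBPv Bv hBv (I.erase v)
        hcard' hI' hdisj'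
      rw [contract_contract hvI] at hBc
      exact ⟨Bc, hBc, hBcBv.trans hBvB₀⟩

/-- in a complex satisfying the First Basis Property, for a face `I`
disjoint from `B₀`, the lexicographically smallest facet of the contraction `Ψ/I`
is contained in `B₀`. -/
theorem stmt18 (E : Finset α) (Δ : Finset α → Prop) (hΔ : IsComplexOn E Δ)
    (hFBP : FBP Δ) (B₀ : Finset α) (hB₀ : IsLexMinFacet Δ B₀)
    (I : Finset α) (hI : Δ I) (hdisj : Disjoint I B₀) :
    ∃ Bc, IsLexMinFacet (contract Δ I) Bc ∧ Bc ⊆ B₀ :=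
  stmt18_aux I.card Δ hΔ.2 hFBP B₀ hB₀ I rfl hI hdisj
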